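/- Let H be a real Hilbert space with dim H ≥ 2 and let φ : H → ℝ be such that for every nonempty closed convex set C ⊆ H the infimum of φ on C is attained at P_C 0. Then, except for at most countably many values of ρ ∈ [0,∞), φ is constant on the sphere S(0;ρ) = {x ∈ H : ‖x‖ = ρ}. -/

import Mathlib

open RealInnerProductSpace

/-- `p` is the metric projection of `x` onto `C`. -/
def IsProj {E : Type*} [NormedAddCommGroup E] (C : Set E) (x p : E) : Prop :=
  p ∈ C ∧ ∀ y ∈ C, ‖x - p‖ ≤ ‖x - y‖

section
variable {H : Type*} [NormedAddCommGroup H] [InnerProductSpace ℝ H] [CompleteSpace H]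

lemma step_lemma (φ : H → ℝ)
    (hφ : ∀ C : Set H, C.Nonempty → IsClosed C → Convex ℝ C →
      ∀ p, IsProj C 0 p → ∀ y ∈ C, φ p ≤ φ y)
    (x y : H) (h : ‖x‖ ^ 2 ≤ ⟪x, y⟫) : φ x ≤ φ y := by
  set C : Set H := {z | ‖x‖ ^ 2 ≤ ⟪x, z⟫} with hC
  have hxC : x ∈ C := by simp [hC, real_inner_self_eq_norm_sq]
  have hclosed : IsClosed C := isClosed_le continuous_const (continuous_const.inner continuous_id)
  have hconvex : Convex ℝ C :=
    convex_halfSpace_ge ⟨fun a b => inner_add_right _ _ _, fun c a => real_inner_smul_right _ _ _⟩ _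
  have hproj : IsProj C 0 x := by
    refine ⟨hxC, fun z hz => ?_⟩
    simp only [zero_sub, norm_neg]
    rcases (norm_nonneg x).eq_or_lt with h0 | h0
    · rw [← h0]; exact norm_nonneg z
    · have h1 : ⟪x, z⟫ ≤ ‖x‖ * ‖z‖ := real_inner_le_norm x z
      have h2 : ‖x‖ ^ 2 ≤ ⟪x, z⟫ := hz
      nlinarith
  exact hφ C ⟨x, hxC⟩ hclosed hconvex x hproj y h

lemma exists_unit_orth (hdim : 2 ≤ Module.rank ℝ H) (u : H) :
    ∃ e : H, ‖e‖ = 1 ∧ ⟪u, e⟫ = 0 := by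
  have hne : (ℝ ∙ u)ᗮ ≠ ⊥ := by
    intro hbot
    rw [Submodule.orthogonal_eq_bot_iff] at hbot
    have h1 : Module.rank ℝ H ≤ 1 := by
      have h2 := rank_span_le (R := ℝ) ({u} : Set H)
      rw [show Submodule.span ℝ ({u} : Set H) = ℝ ∙ u from rfl, hbot] at h2
      simpa using h2.trans_eq (by simp)
    have := hdim.trans h1
    norm_num at this
  obtain ⟨w, hw, hw0⟩ := Submodule.ne_bot_iff _ |>.1 hne
  refine ⟨‖w‖⁻¹ • w, ?_, ?_⟩
  · rw [norm_smul, norm_inv, norm_norm, inv_mul_cancel₀ (norm_ne_zero_iff.2 hw0)]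
  · rw [real_inner_smul_right]
    have := (Submodule.mem_orthogonal _ _).1 hw u (Submodule.mem_span_singleton_self u)
    simp [this]

end

section
variable {H : Type*} [NormedAddCommGroup H] [InnerProductSpace ℝ H] [CompleteSpace H]

lemma exists_decomp (hdim : 2 ≤ Module.rank ℝ H) (u v : H) (hu : ‖u‖ = 1) (hv : ‖v‖ = 1) :
    ∃ e : H, ‖e‖ = 1 ∧ ⟪u, e⟫ = 0 ∧
      v = Real.cos (Real.arccos ⟪u, v⟫) • u + Real.sin (Real.arccos ⟪u, v⟫) • e := by
  set c : ℝ := ⟪u, v⟫ with hc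
  have hc1 : |c| ≤ 1 := by
    simpa [hu, hv] using abs_real_inner_le_norm u v
  obtain ⟨hcl, hcu⟩ := abs_le.1 hc1
  have hcos : Real.cos (Real.arccos c) = c := Real.cos_arccos hcl hcu
  have hsin : Real.sin (Real.arccos c) = Real.sqrt (1 - c ^ 2) := Real.sin_arccos c
  set w : H := v - c • u with hwdef
  have hiw : ⟪u, w⟫ = 0 := by
    simp [hwdef, inner_sub_right, real_inner_smul_right, real_inner_self_eq_norm_sq, hu, hc]
  have hnw : ‖w‖ ^ 2 = 1 - c ^ 2 := by
    have h1 : ‖w‖ ^ 2 = ⟪w, w⟫ := (real_inner_self_eq_norm_sq w).symm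
    have h2 : ⟪v, u⟫ = c := by rw [real_inner_comm]
    rw [h1, hwdef]
    simp only [inner_sub_left, inner_sub_right, real_inner_smul_left, real_inner_smul_right,
      real_inner_self_eq_norm_sq, norm_smul, Real.norm_eq_abs, hu, hv, h2, ← hc, mul_one,
      mul_pow, sq_abs]
    ring
  by_cases hw0 : w = 0
  · obtain ⟨e, he1, he2⟩ := exists_unit_orth hdim u
    refine ⟨e, he1, he2, ?_⟩
    have hc2 : (1 : ℝ) - c ^ 2 = 0 := by
      rw [← hnw, hw0]; simp
    have hs0 : Real.sqrt (1 - c ^ 2) = 0 := by rw [hc2]; exact Real.sqrt_zero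
    have hveq : v = c • u := by
      have := sub_eq_zero.1 hw0
      linear_combination (norm := module) this
    rw [hcos, hsin, hs0, zero_smul, add_zero, ← hveq]
  · refine ⟨‖w‖⁻¹ • w, ?_, ?_, ?_⟩
    · rw [norm_smul, norm_inv, norm_norm, inv_mul_cancel₀ (norm_ne_zero_iff.2 hw0)]
    · rw [real_inner_smul_right, hiw, mul_zero]
    · have hnww : Real.sqrt (1 - c ^ 2) = ‖w‖ := by
        rw [← hnw]; exact Real.sqrt_sq (norm_nonneg w)
      rw [hcos, hsin, hnww, smul_smul, mul_inv_cancel₀ (norm_ne_zero_iff.2 hw0), one_smul,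
        hwdef]
      module

end


section
variable {H : Type*} [NormedAddCommGroup H] [InnerProductSpace ℝ H] [CompleteSpace H]

lemma norm_comb_sq (u e : H) (hu : ‖u‖ = 1) (he : ‖e‖ = 1) (hue : ⟪u, e⟫ = 0) (a b : ℝ) :
    ‖a • u + b • e‖ ^ 2 = a ^ 2 + b ^ 2 := by
  rw [norm_add_sq_real, real_inner_smul_left, real_inner_smul_right, hue,
    norm_smul (a) u, norm_smul (b) e, hu, he]
  simp only [Real.norm_eq_abs, mul_one, mul_zero, add_zero, sq_abs]

lemma inner_comb (u e : H) (hu : ‖u‖ = 1) (he : ‖e‖ = 1) (hue : ⟪u, e⟫ = 0) (a b a' b' : ℝ) :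
    ⟪a • u + b • e, a' • u + b' • e⟫ = a * a' + b * b' := by
  have heu : ⟪e, u⟫ = 0 := by rw [real_inner_comm]; exact hue
  have huu : ⟪u, u⟫ = 1 := by rw [real_inner_self_eq_norm_sq, hu]; norm_num
  have hee : ⟪e, e⟫ = 1 := by rw [real_inner_self_eq_norm_sq, he]; norm_num
  rw [inner_add_left, inner_add_right, inner_add_right]
  simp only [real_inner_smul_left, real_inner_smul_right, hue, heu, huu, hee]
  ring

lemma chain_lemma (φ : H → ℝ)
    (hφ : ∀ C : Set H, C.Nonempty → IsClosed C → Convex ℝ C →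
      ∀ p, IsProj C 0 p → ∀ y ∈ C, φ p ≤ φ y)
    (u e : H) (hu : ‖u‖ = 1) (he : ‖e‖ = 1) (hue : ⟪u, e⟫ = 0)
    (r q δ : ℝ) (hr : 0 < r) (hq : 0 < q) (hqc : 1 ≤ q * Real.cos δ) (n : ℕ) :
    φ (r • u) ≤ φ ((r * q ^ n) • (Real.cos (n * δ) • u + Real.sin (n * δ) • e)) := by
  induction n with
  | zero =>
    simp
  | succ n ih =>
    refine ih.trans (step_lemma φ hφ _ _ ?_)
    have h1 : ‖(r * q ^ n) • (Real.cos (n * δ) • u + Real.sin (n * δ) • e)‖ ^ 2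
        = (r * q ^ n) ^ 2 := by
      rw [norm_smul, mul_pow, Real.norm_eq_abs, sq_abs, norm_comb_sq u e hu he hue,
        Real.cos_sq_add_sin_sq, mul_one]
    have hcs : Real.cos ((n : ℝ) * δ) * Real.cos (((n + 1 : ℕ) : ℝ) * δ)
        + Real.sin ((n : ℝ) * δ) * Real.sin (((n + 1 : ℕ) : ℝ) * δ) = Real.cos δ := by
      have harg : (n : ℝ) * δ - ((n + 1 : ℕ) : ℝ) * δ = -δ := by push_cast; ring
      rw [← Real.cos_sub, harg, Real.cos_neg]
    rw [h1, real_inner_smul_left, real_inner_smul_right, inner_comb u e hu he hue, hcs]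
    have hqn : 0 < q ^ n := pow_pos hq n
    have hq1 : q ^ (n + 1) = q ^ n * q := pow_succ q n
    calc (r * q ^ n) ^ 2 = (r * q ^ n) ^ 2 * 1 := by ring
    _ ≤ (r * q ^ n) ^ 2 * (q * Real.cos δ) :=
        mul_le_mul_of_nonneg_left hqc (sq_nonneg (r * q ^ n))
    _ = r * q ^ n * (r * q ^ (n + 1) * Real.cos δ) := by rw [hq1]; ring

end

section
variable {H : Type*} [NormedAddCommGroup H] [InnerProductSpace ℝ H] [CompleteSpace H]

lemma exists_good_n (θ a : ℝ) (hθ0 : 0 ≤ θ) (hθ4 : θ ≤ 4) (ha0 : 0 < a) (ha1 : a < 1) :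
    ∃ n : ℕ, 0 < n ∧ 0 < Real.cos (θ / n) ∧ a < Real.cos (θ / n) ^ n := by
  obtain ⟨n, hn⟩ := exists_nat_gt (max 16 (θ ^ 2 / (2 * (1 - a))))
  have hn16 : (16 : ℝ) < n := lt_of_le_of_lt (le_max_left _ _) hn
  have hn2 : θ ^ 2 / (2 * (1 - a)) < n := lt_of_le_of_lt (le_max_right _ _) hn
  have hnpos : (0 : ℝ) < n := by linarith
  have hnne : (n : ℝ) ≠ 0 := hnpos.ne'
  have hsmall : θ ^ 2 / (2 * (n : ℝ) ^ 2) ≤ 1 / 2 := by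
    rw [div_le_div_iff₀ (by positivity) (by norm_num)]
    nlinarith
  have hcos1 : 1 - θ ^ 2 / (2 * (n : ℝ) ^ 2) ≤ Real.cos (θ / n) := by
    have h1 := Real.one_sub_sq_div_two_le_cos (x := θ / n)
    have heq : (θ / (n : ℝ)) ^ 2 / 2 = θ ^ 2 / (2 * (n : ℝ) ^ 2) := by
      rw [div_pow, div_div, mul_comm ((n : ℝ) ^ 2) 2]
    rw [heq] at h1
    exact h1
  have hcospos : 0 < Real.cos (θ / n) := by linarith
  have hbern : 1 - θ ^ 2 / (2 * n) ≤ (1 - θ ^ 2 / (2 * (n : ℝ) ^ 2)) ^ n := by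
    have h1 := one_add_mul_le_pow (a := -(θ ^ 2 / (2 * (n : ℝ) ^ 2))) (by nlinarith) n
    have heq : 1 + (n : ℝ) * -(θ ^ 2 / (2 * (n : ℝ) ^ 2)) = 1 - θ ^ 2 / (2 * n) := by
      field_simp
      ring
    calc 1 - θ ^ 2 / (2 * n) = 1 + (n : ℝ) * -(θ ^ 2 / (2 * (n : ℝ) ^ 2)) := heq.symm
    _ ≤ (1 + -(θ ^ 2 / (2 * (n : ℝ) ^ 2))) ^ n := h1
    _ = (1 - θ ^ 2 / (2 * (n : ℝ) ^ 2)) ^ n := by ring_nf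
  have hlast : a < 1 - θ ^ 2 / (2 * n) := by
    rw [div_lt_iff₀ (by linarith : (0 : ℝ) < 2 * (1 - a))] at hn2
    have h3 : θ ^ 2 / (2 * n) < 1 - a := by
      rw [div_lt_iff₀ (by positivity)]
      nlinarith
    linarith
  refine ⟨n, by exact_mod_cast hnpos, hcospos, ?_⟩
  calc a < 1 - θ ^ 2 / (2 * n) := hlast
  _ ≤ (1 - θ ^ 2 / (2 * (n : ℝ) ^ 2)) ^ n := hbern
  _ ≤ Real.cos (θ / n) ^ n := pow_le_pow_left₀ (by linarith) hcos1 n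

lemma mono_lemma (hdim : 2 ≤ Module.rank ℝ H) (φ : H → ℝ)
    (hφ : ∀ C : Set H, C.Nonempty → IsClosed C → Convex ℝ C →
      ∀ p, IsProj C 0 p → ∀ y ∈ C, φ p ≤ φ y)
    (x y : H) (hxy : ‖x‖ < ‖y‖) : φ x ≤ φ y := by
  by_cases hx0 : x = 0
  · exact step_lemma φ hφ _ _ (by simp [hx0])
  have hr : 0 < ‖x‖ := norm_pos_iff.2 hx0
  have hs : 0 < ‖y‖ := hr.trans hxy
  have hu : ‖‖x‖⁻¹ • x‖ = 1 := by
    rw [norm_smul, norm_inv, norm_norm, inv_mul_cancel₀ hr.ne']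
  have hv : ‖‖y‖⁻¹ • y‖ = 1 := by
    rw [norm_smul, norm_inv, norm_norm, inv_mul_cancel₀ hs.ne']
  obtain ⟨e, he, hue, hveq⟩ := exists_decomp hdim _ _ hu hv
  set u : H := ‖x‖⁻¹ • x with hudef
  set v : H := ‖y‖⁻¹ • y with hvdef
  set θ : ℝ := Real.arccos ⟪u, v⟫ with hθdef
  have hθ0 : 0 ≤ θ := Real.arccos_nonneg _
  have hθ4 : θ ≤ 4 := (Real.arccos_le_pi _).trans (by linarith [Real.pi_le_four])
  have hrs0 : 0 < ‖x‖ / ‖y‖ := div_pos hr hs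
  have hrs1 : ‖x‖ / ‖y‖ < 1 := (div_lt_one hs).2 hxy
  obtain ⟨n, hn0, hcospos, hkey⟩ := exists_good_n θ (‖x‖ / ‖y‖) hθ0 hθ4 hrs0 hrs1
  have hnne : (n : ℝ) ≠ 0 := Nat.cast_ne_zero.2 hn0.ne'
  set q : ℝ := (‖y‖ / ‖x‖) ^ ((1 : ℝ) / n) with hqdef
  have hq0 : 0 < q := Real.rpow_pos_of_pos (div_pos hs hr) _
  have hkey2 : (‖x‖ / ‖y‖) ^ ((1 : ℝ) / n) < Real.cos (θ / n) := by
    have h := Real.rpow_lt_rpow hrs0.le hkey (by positivity : (0 : ℝ) < 1 / n)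
    rwa [← Real.rpow_natCast (Real.cos (θ / n)) n, ← Real.rpow_mul hcospos.le,
      mul_one_div, div_self hnne, Real.rpow_one] at h
  have hqinv : q⁻¹ = (‖x‖ / ‖y‖) ^ ((1 : ℝ) / n) := by
    rw [hqdef, ← Real.inv_rpow (div_pos hs hr).le, inv_div]
  have hqcos : 1 ≤ q * Real.cos (θ / n) := by
    have h1 : q⁻¹ < Real.cos (θ / n) := hqinv ▸ hkey2
    have h2 := mul_lt_mul_of_pos_left h1 hq0
    rw [mul_inv_cancel₀ hq0.ne'] at h2
    exact h2.le
  have hqn : ‖x‖ * q ^ n = ‖y‖ := by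
    rw [hqdef, ← Real.rpow_natCast ((‖y‖ / ‖x‖) ^ ((1 : ℝ) / n)) n,
      ← Real.rpow_mul (div_pos hs hr).le, one_div, inv_mul_cancel₀ hnne, Real.rpow_one]
    field_simp
  have hchain := chain_lemma φ hφ u e hu he hue ‖x‖ q (θ / n) hr hq0 hqcos n
  have hxu : ‖x‖ • u = x := by
    rw [hudef, smul_smul, mul_inv_cancel₀ hr.ne', one_smul]
  have hnθ : (n : ℝ) * (θ / n) = θ := by field_simp
  have hyv : (‖x‖ * q ^ n) • (Real.cos ((n : ℝ) * (θ / n)) • u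
      + Real.sin ((n : ℝ) * (θ / n)) • e) = y := by
    rw [hnθ, ← hveq, hqn, hvdef, smul_smul, mul_inv_cancel₀ hs.ne', one_smul]
  rwa [hxu, hyv] at hchain

end

theorem constant_on_spheres_off_countable
    {H : Type*} [NormedAddCommGroup H] [InnerProductSpace ℝ H] [CompleteSpace H]
    (hdim : 2 ≤ Module.rank ℝ H) (φ : H → ℝ)
    (hφ : ∀ C : Set H, C.Nonempty → IsClosed C → Convex ℝ C →
      ∀ p, IsProj C 0 p → ∀ y ∈ C, φ p ≤ φ y) :
    Set.Countable {ρ : ℝ | 0 ≤ ρ ∧ ∃ x y : H, ‖x‖ = ρ ∧ ‖y‖ = ρ ∧ φ x ≠ φ y} := by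
  classical
  set B := {ρ : ℝ | 0 ≤ ρ ∧ ∃ x y : H, ‖x‖ = ρ ∧ ‖y‖ = ρ ∧ φ x ≠ φ y} with hB
  have hmono := mono_lemma hdim φ hφ
  have hP : ∀ ρ ∈ B, ∃ q : ℚ,
      (∃ a : H, ‖a‖ = ρ ∧ φ a < (q : ℝ)) ∧ (∃ b : H, ‖b‖ = ρ ∧ (q : ℝ) < φ b) := by
    rintro ρ ⟨hρ0, x, y, hx, hy, hne⟩
    rcases hne.lt_or_gt with h | h
    · obtain ⟨q, hq1, hq2⟩ := exists_rat_btwn h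
      exact ⟨q, ⟨x, hx, hq1⟩, ⟨y, hy, hq2⟩⟩
    · obtain ⟨q, hq1, hq2⟩ := exists_rat_btwn h
      exact ⟨q, ⟨y, hy, hq1⟩, ⟨x, hx, hq2⟩⟩
  choose! f hf1 hf2 using hP
  have hmonoF : ∀ ρ₁ ∈ B, ∀ ρ₂ ∈ B, ρ₁ < ρ₂ → f ρ₁ < f ρ₂ := by
    intro ρ₁ h1 ρ₂ h2 hlt
    obtain ⟨b, hb, hfb⟩ := hf2 ρ₁ h1
    obtain ⟨a, ha, hfa⟩ := hf1 ρ₂ h2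
    have hba : φ b ≤ φ a := hmono b a (by rw [hb, ha]; exact hlt)
    have hlt2 : ((f ρ₁ : ℚ) : ℝ) < ((f ρ₂ : ℚ) : ℝ) := lt_of_lt_of_le hfb (hba.trans hfa.le)
    exact_mod_cast hlt2
  have hinj : Set.InjOn f B := by
    intro a ha b hb hab
    by_contra hne
    rcases lt_or_gt_of_ne hne with h | h
    · exact absurd hab (hmonoF a ha b hb h).ne
    · exact absurd hab.symm (hmonoF b hb a ha h).ne
  exact (Set.mapsTo_univ f B).countable_of_injOn hinj Set.countable_univ
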